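/- Random reshuffling deviation bound under relaxed WGC: suppose each $f_i$ is $L_i$-smooth with $L_{\max} = \max_i L_i$, $f = \frac{1}{n}\sum_i f_i$ attains its minimum $f(x^*)$, and $\frac{1}{n}\sum_{i=1}^n\|\nabla f_i(x)\|^2 \leq 2\alpha L(f(x)-f(x^*)) + \sigma^2$ for all $x$. For one epoch of random reshuffling with step size $\eta \leq \frac{1}{\sqrt{3} n L_{\max}}$: $\mathbb{E}\left[\sum_{i=0}^{n-1}\|x_i - x_0\|^2\right] \leq 4\eta^2 n^2 \alpha L (f(x_0)-f(x^*)) + 2\eta^2 n^3 \|\nabla f(x_0)\|^2 + 2\eta^2 n^2 \sigma^2$, where the expectation is over the uniformly random permutation $\pi$ used in the epoch ($x_0$ fixed). -/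

import Mathlib

noncomputable section

/-- One epoch of (re)shuffled incremental updates: starting from `x0`, the
iterate after `j` steps using the sample order given by the permutation `π`,
gradient oracle `g` and step size `η`. -/
def epochIter {d n : ℕ}
    (g : Fin n → EuclideanSpace ℝ (Fin d) → EuclideanSpace ℝ (Fin d))
    (η : ℝ) (x0 : EuclideanSpace ℝ (Fin d)) (π : Equiv.Perm (Fin n)) :
    ℕ → EuclideanSpace ℝ (Fin d)
  | 0 => x0
  | j + 1 =>
      if h : j < n then
        epochIter g η x0 π j - η • g (π ⟨j, h⟩) (epochIter g η x0 π j)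
      else epochIter g η x0 π j

section PermAux

open Finset Equiv

variable {β : Type*} [DecidableEq β] [Fintype β]

lemma perm_sum_apply_indep (h : β → ℝ) (j j' : β) :
    ∑ π : Equiv.Perm β, h (π j) = ∑ π : Equiv.Perm β, h (π j') := by
  refine Fintype.sum_equiv (Equiv.mulRight (Equiv.swap j j')) _ _ (fun π => ?_)
  simp [Equiv.Perm.mul_apply]

lemma perm_sum_apply (h : β → ℝ) (j : β) :
    (Fintype.card β : ℝ) * ∑ π : Equiv.Perm β, h (π j)
      = (Fintype.card (Equiv.Perm β) : ℝ) * ∑ k, h k := by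
  have h1 : ∑ j' : β, ∑ π : Equiv.Perm β, h (π j')
      = (Fintype.card β : ℝ) * ∑ π : Equiv.Perm β, h (π j) := by
    rw [Finset.sum_congr rfl (fun j' _ => perm_sum_apply_indep h j' j)]
    simp [Finset.sum_const, mul_comm]
  rw [← h1, Finset.sum_comm]
  rw [Finset.sum_congr rfl (fun π _ => Equiv.sum_comp π h)]
  simp [Finset.sum_const, mul_comm]

omit [Fintype β] in
lemma exists_perm_pair {j k j' k' : β} (h1 : j ≠ k) (h2 : j' ≠ k') :
    ∃ σ : Equiv.Perm β, σ j = j' ∧ σ k = k' := by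
  refine ⟨(Equiv.swap (Equiv.swap j j' k) k') * Equiv.swap j j', ?_, ?_⟩
  · have hj : Equiv.swap j j' j = j' := Equiv.swap_apply_left j j'
    simp only [Equiv.Perm.mul_apply, hj]
    apply Equiv.swap_apply_of_ne_of_ne
    · intro hc
      exact h1 ((Equiv.swap j j').injective (hj.trans hc))
    · exact h2
  · simp [Equiv.Perm.mul_apply, Equiv.swap_apply_left]

lemma perm_sum_pair_indep (H : β → β → ℝ) {j k j' k' : β} (h1 : j ≠ k) (h2 : j' ≠ k') :
    ∑ π : Equiv.Perm β, H (π j) (π k) = ∑ π : Equiv.Perm β, H (π j') (π k') := by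
  obtain ⟨σ, hσj, hσk⟩ := exists_perm_pair h2 h1
  refine Fintype.sum_equiv (Equiv.mulRight σ) _ _ (fun π => ?_)
  simp [Equiv.Perm.mul_apply, hσj, hσk]

lemma perm_sum_pair (H : β → β → ℝ) {j k : β} (hjk : j ≠ k) :
    ((Finset.univ : Finset β).offDiag.card : ℝ) * ∑ π : Equiv.Perm β, H (π j) (π k)
      = (Fintype.card (Equiv.Perm β) : ℝ) * ∑ p ∈ Finset.univ.offDiag, H p.1 p.2 := by
  have h1 : ∑ p ∈ (Finset.univ : Finset β).offDiag, ∑ π : Equiv.Perm β, H (π p.1) (π p.2)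
      = ((Finset.univ : Finset β).offDiag.card : ℝ) * ∑ π : Equiv.Perm β, H (π j) (π k) := by
    rw [Finset.sum_congr rfl (fun p hp => perm_sum_pair_indep H
      (Finset.mem_offDiag.mp hp).2.2 hjk)]
    simp [Finset.sum_const, mul_comm]
  rw [← h1, Finset.sum_comm]
  have h2 : ∀ π : Equiv.Perm β,
      ∑ p ∈ (Finset.univ : Finset β).offDiag, H (π p.1) (π p.2)
        = ∑ p ∈ (Finset.univ : Finset β).offDiag, H p.1 p.2 := by
    intro π
    refine Finset.sum_equiv (π.prodCongr π) (fun p => ?_) (fun p _ => rfl)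
    simp [Finset.mem_offDiag, π.injective.ne_iff]
  rw [Finset.sum_congr rfl (fun π _ => h2 π)]
  simp [Finset.sum_const, mul_comm]

end PermAux

section NormAux

open Finset InnerProductSpace

variable {d n : ℕ}

lemma grad_avg (f : Fin n → EuclideanSpace ℝ (Fin d) → ℝ)
    (hdiff : ∀ i, Differentiable ℝ (f i)) (x0 : EuclideanSpace ℝ (Fin d)) :
    gradient (fun x => (n : ℝ)⁻¹ * ∑ i, f i x) x0
      = (n : ℝ)⁻¹ • ∑ i, gradient (f i) x0 := by
  have h1 : ∀ i : Fin n, HasFDerivAt (f i)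
      (toDual ℝ (EuclideanSpace ℝ (Fin d)) (gradient (f i) x0)) x0 :=
    fun i => ((hdiff i).differentiableAt.hasGradientAt).hasFDerivAt
  have h2 : HasFDerivAt (fun x => (n : ℝ)⁻¹ * ∑ i, f i x)
      ((n : ℝ)⁻¹ • ∑ i, toDual ℝ (EuclideanSpace ℝ (Fin d)) (gradient (f i) x0)) x0 :=
    (HasFDerivAt.fun_sum (fun i _ => h1 i)).const_mul _
  have h3 : ((n : ℝ)⁻¹ • ∑ i, toDual ℝ (EuclideanSpace ℝ (Fin d)) (gradient (f i) x0))
      = toDual ℝ (EuclideanSpace ℝ (Fin d)) ((n : ℝ)⁻¹ • ∑ i, gradient (f i) x0) := by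
    simp [map_sum]
  rw [h3] at h2
  simpa only [LinearIsometryEquiv.symm_apply_apply] using h2.hasGradientAt.gradient

lemma offDiag_inner_sum (b : Fin n → EuclideanSpace ℝ (Fin d)) (hb : ∑ k, b k = 0) :
    ∑ p ∈ (Finset.univ : Finset (Fin n)).offDiag, (inner ℝ (b p.1) (b p.2) : ℝ)
      = - ∑ k, ‖b k‖ ^ 2 := by
  have h0 : ∑ p ∈ (Finset.univ : Finset (Fin n)) ×ˢ Finset.univ, (inner ℝ (b p.1) (b p.2) : ℝ)
      = 0 := by
    rw [Finset.sum_product]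
    simp_rw [← inner_sum, ← sum_inner, hb, inner_zero_right]
  rw [← Finset.diag_union_offDiag, Finset.sum_union (Finset.disjoint_diag_offDiag _)] at h0
  have hd : ∑ p ∈ (Finset.univ : Finset (Fin n)).diag, (inner ℝ (b p.1) (b p.2) : ℝ)
      = ∑ k, ‖b k‖ ^ 2 := by
    rw [Finset.sum_diag]
    simp only [real_inner_self_eq_norm_sq]
  linarith

lemma norm_add_sq_le_two (u v : EuclideanSpace ℝ (Fin d)) :
    ‖u + v‖ ^ 2 ≤ 2 * ‖u‖ ^ 2 + 2 * ‖v‖ ^ 2 := by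
  nlinarith [pow_le_pow_left₀ (norm_nonneg (u + v)) (norm_add_le u v) 2,
    sq_nonneg (‖u‖ - ‖v‖)]

lemma norm_sum_sq_le {ι : Type*} (s : Finset ι) (u : ι → EuclideanSpace ℝ (Fin d)) :
    ‖∑ j ∈ s, u j‖ ^ 2 ≤ (s.card : ℝ) * ∑ j ∈ s, ‖u j‖ ^ 2 := by
  calc ‖∑ j ∈ s, u j‖ ^ 2 ≤ (∑ j ∈ s, ‖u j‖) ^ 2 := by
        apply pow_le_pow_left₀ (norm_nonneg _) (norm_sum_le _ _)
    _ ≤ (s.card : ℝ) * ∑ j ∈ s, ‖u j‖ ^ 2 :=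
        sq_sum_le_card_mul_sum_sq (s := s) (f := fun j => ‖u j‖)

end NormAux

set_option maxHeartbeats 2000000 in
/-- Random reshuffling within-epoch deviation bound under the relaxed weak
growth condition; the expectation is over the uniformly random permutation. -/
theorem rr_deviation_bound_relaxed_wgc
    (d n : ℕ) (hn : 2 ≤ n)
    (f : Fin n → EuclideanSpace ℝ (Fin d) → ℝ)
    (hdiff : ∀ i, Differentiable ℝ (f i))
    (F : EuclideanSpace ℝ (Fin d) → ℝ)
    (hF : F = fun x => (n : ℝ)⁻¹ * ∑ i, f i x)
    (L Lmax : ℝ) (hL : 0 < L) (hLmax : 0 < Lmax)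
    (hsmooth : ∀ x y : EuclideanSpace ℝ (Fin d),
      ‖gradient F x - gradient F y‖ ≤ L * ‖x - y‖)
    (hsmooth_i : ∀ i, ∀ x y : EuclideanSpace ℝ (Fin d),
      ‖gradient (f i) x - gradient (f i) y‖ ≤ Lmax * ‖x - y‖)
    (xstar : EuclideanSpace ℝ (Fin d))
    (hmin : ∀ x, F xstar ≤ F x)
    (α σ : ℝ) (hα : 0 ≤ α) (hσ : 0 ≤ σ)
    (hWGC : ∀ x, (n : ℝ)⁻¹ * ∑ i, ‖gradient (f i) x‖ ^ 2
      ≤ 2 * α * L * (F x - F xstar) + σ ^ 2)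
    (η : ℝ) (hη0 : 0 < η) (hη : η ≤ 1 / (Real.sqrt 3 * n * Lmax))
    (x0 : EuclideanSpace ℝ (Fin d)) :
    ((Nat.factorial n : ℝ))⁻¹ *
        ∑ π : Equiv.Perm (Fin n), ∑ i ∈ Finset.range n,
          ‖epochIter (fun i => gradient (f i)) η x0 π i - x0‖ ^ 2
      ≤ 4 * η ^ 2 * n ^ 2 * α * L * (F x0 - F xstar)
        + 2 * η ^ 2 * n ^ 3 * ‖gradient F x0‖ ^ 2
        + 2 * η ^ 2 * n ^ 2 * σ ^ 2 := by
  classical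
  have hn0 : 0 < n := by omega
  have hnR : (0:ℝ) < (n:ℝ) := by exact_mod_cast hn0
  set g : Fin n → EuclideanSpace ℝ (Fin d) → EuclideanSpace ℝ (Fin d) :=
    fun i => gradient (f i) with hg
  set p : ℕ → Fin n := fun j => ⟨j % n, Nat.mod_lt j hn0⟩ with hp
  set a : Fin n → EuclideanSpace ℝ (Fin d) := fun k => g k x0 with ha
  set A : Equiv.Perm (Fin n) → ℕ → ℝ :=
    fun π i => ‖∑ j ∈ Finset.range i, a (π (p j))‖ ^ 2 with hA
  set T : Equiv.Perm (Fin n) → ℝ :=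
    fun π => ∑ i ∈ Finset.range n, ‖epochIter g η x0 π i - x0‖ ^ 2 with hT
  have hiter : ∀ π : Equiv.Perm (Fin n), ∀ i, i ≤ n → epochIter g η x0 π i
      = x0 - η • ∑ j ∈ Finset.range i, g (π (p j)) (epochIter g η x0 π j) := by
    intro π i hi
    induction i with
    | zero => simp [epochIter]
    | succ m ih =>
      have hm : m < n := hi
      have hpm : p m = ⟨m, hm⟩ := by
        simp only [hp]
        exact Fin.ext (Nat.mod_eq_of_lt hm)
      rw [show epochIter g η x0 π (m + 1)
            = epochIter g η x0 π m - η • g (π ⟨m, hm⟩) (epochIter g η x0 π m) by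
          simp [epochIter, hm]]
      rw [Finset.sum_range_succ, hpm, ih (le_of_lt hm)]
      module
  -- step size bound
  have hsnL : 0 < Real.sqrt 3 * n * Lmax := by
    have h3 : (0:ℝ) < Real.sqrt 3 := Real.sqrt_pos.mpr (by norm_num)
    positivity
  have hη2 : η ^ 2 * (n:ℝ) ^ 2 * Lmax ^ 2 ≤ 1 / 3 := by
    have h1 : η * (Real.sqrt 3 * n * Lmax) ≤ 1 := (le_div_iff₀ hsnL).mp hη
    have h3 : Real.sqrt 3 ^ 2 = 3 := Real.sq_sqrt (by norm_num)
    nlinarith [mul_le_mul h1 h1 (le_of_lt (mul_pos hη0 hsnL)) zero_le_one]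
  have hgauss : ∑ i ∈ Finset.range n, (i:ℝ) = (n:ℝ) * ((n:ℝ) - 1) / 2 := by
    have hg2 := congrArg (Nat.cast : ℕ → ℝ) (Finset.sum_range_id_mul_two n)
    push_cast [Nat.cast_sub (by omega : 1 ≤ n)] at hg2
    linarith
  -- deterministic per-permutation bound
  have hTbound : ∀ π : Equiv.Perm (Fin n),
      T π ≤ 3 * η ^ 2 * ∑ i ∈ Finset.range n, A π i := by
    intro π
    have hTnonneg : 0 ≤ T π := by
      apply Finset.sum_nonneg; intro i _; positivity
    have hDi : ∀ i ∈ Finset.range n, ‖epochIter g η x0 π i - x0‖ ^ 2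
        ≤ 2 * η ^ 2 * Lmax ^ 2 * (i:ℝ) * T π + 2 * η ^ 2 * A π i := by
      intro i hi
      have hi' : i ≤ n := le_of_lt (Finset.mem_range.mp hi)
      set v : ℕ → EuclideanSpace ℝ (Fin d) :=
        fun j => g (π (p j)) (epochIter g η x0 π j) with hv
      set w : ℕ → EuclideanSpace ℝ (Fin d) := fun j => a (π (p j)) with hw
      have h1 : ‖epochIter g η x0 π i - x0‖ ^ 2
          = η ^ 2 * ‖∑ j ∈ Finset.range i, v j‖ ^ 2 := by
        rw [hiter π i hi']
        rw [show x0 - η • ∑ j ∈ Finset.range i, v j - x0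
            = -(η • ∑ j ∈ Finset.range i, v j) by module]
        rw [norm_neg, norm_smul, mul_pow, Real.norm_eq_abs, sq_abs]
      have h2 : (∑ j ∈ Finset.range i, v j)
          = (∑ j ∈ Finset.range i, (v j - w j)) + ∑ j ∈ Finset.range i, w j := by
        rw [← Finset.sum_add_distrib]
        apply Finset.sum_congr rfl
        intro j _; abel
      have h3 : ‖∑ j ∈ Finset.range i, v j‖ ^ 2
          ≤ 2 * ‖∑ j ∈ Finset.range i, (v j - w j)‖ ^ 2 + 2 * A π i := by
        rw [h2]
        exact norm_add_sq_le_two _ _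
      have h4 : ‖∑ j ∈ Finset.range i, (v j - w j)‖ ^ 2
          ≤ (i:ℝ) * ∑ j ∈ Finset.range i, ‖v j - w j‖ ^ 2 := by
        have := norm_sum_sq_le (Finset.range i) (fun j => v j - w j)
        rwa [Finset.card_range] at this
      have h5 : ∑ j ∈ Finset.range i, ‖v j - w j‖ ^ 2
          ≤ Lmax ^ 2 * T π := by
        have h5a : ∀ j ∈ Finset.range i, ‖v j - w j‖ ^ 2
            ≤ Lmax ^ 2 * ‖epochIter g η x0 π j - x0‖ ^ 2 := by
          intro j _
          have := hsmooth_i (π (p j)) (epochIter g η x0 π j) x0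
          have hnn : (0:ℝ) ≤ ‖v j - w j‖ := norm_nonneg _
          nlinarith [norm_nonneg (epochIter g η x0 π j - x0)]
        calc ∑ j ∈ Finset.range i, ‖v j - w j‖ ^ 2
            ≤ ∑ j ∈ Finset.range i, Lmax ^ 2 * ‖epochIter g η x0 π j - x0‖ ^ 2 :=
              Finset.sum_le_sum h5a
          _ = Lmax ^ 2 * ∑ j ∈ Finset.range i, ‖epochIter g η x0 π j - x0‖ ^ 2 := by
              rw [Finset.mul_sum]
          _ ≤ Lmax ^ 2 * T π := by
              apply mul_le_mul_of_nonneg_left _ (sq_nonneg Lmax)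
              apply Finset.sum_le_sum_of_subset_of_nonneg
                (Finset.range_subset_range.mpr hi')
              intro j _ _; positivity
      have hi0 : (0:ℝ) ≤ (i:ℝ) := Nat.cast_nonneg i
      calc ‖epochIter g η x0 π i - x0‖ ^ 2
          = η ^ 2 * ‖∑ j ∈ Finset.range i, v j‖ ^ 2 := h1
        _ ≤ η ^ 2 * (2 * ((i:ℝ) * (Lmax ^ 2 * T π)) + 2 * A π i) := by
            apply mul_le_mul_of_nonneg_left _ (sq_nonneg η)
            have h6 : ‖∑ j ∈ Finset.range i, (v j - w j)‖ ^ 2 ≤ (i:ℝ) * (Lmax ^ 2 * T π) :=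
              le_trans h4 (mul_le_mul_of_nonneg_left h5 hi0)
            linarith [h3]
        _ = 2 * η ^ 2 * Lmax ^ 2 * (i:ℝ) * T π + 2 * η ^ 2 * A π i := by ring
    have hsum := Finset.sum_le_sum hDi
    have hsplit : ∑ i ∈ Finset.range n,
        (2 * η ^ 2 * Lmax ^ 2 * (i:ℝ) * T π + 2 * η ^ 2 * A π i)
        = 2 * η ^ 2 * Lmax ^ 2 * T π * (∑ i ∈ Finset.range n, (i:ℝ))
          + 2 * η ^ 2 * ∑ i ∈ Finset.range n, A π i := by
      rw [Finset.sum_add_distrib, ← Finset.mul_sum]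
      congr 1
      rw [Finset.mul_sum]
      apply Finset.sum_congr rfl
      intro i _; ring
    rw [hsplit, hgauss] at hsum
    have hAnn : 0 ≤ ∑ i ∈ Finset.range n, A π i := by
      apply Finset.sum_nonneg; intro i _; positivity
    have hnn : (2:ℝ) ≤ (n:ℝ) := by exact_mod_cast hn
    nlinarith [mul_le_mul_of_nonneg_right hη2 hTnonneg,
      mul_nonneg (mul_nonneg (mul_nonneg (sq_nonneg η) (sq_nonneg Lmax)) hTnonneg)
        (le_trans zero_le_two hnn)]
  -- mean gradient and centered gradients
  have hgbar : gradient F x0 = (n:ℝ)⁻¹ • ∑ k, a k := by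
    rw [hF]; exact grad_avg f hdiff x0
  set gbar : EuclideanSpace ℝ (Fin d) := gradient F x0 with hgbar0
  set b : Fin n → EuclideanSpace ℝ (Fin d) := fun k => a k - gbar with hb
  have hsuma : ∑ k, a k = (n:ℝ) • gbar := by
    rw [hgbar, smul_smul, mul_inv_cancel₀ hnR.ne', one_smul]
  have hbsum : ∑ k, b k = 0 := by
    simp only [hb]
    rw [Finset.sum_sub_distrib, hsuma, Finset.sum_const, Finset.card_univ, Fintype.card_fin,
      ← Nat.cast_smul_eq_nsmul ℝ, sub_self]
  have hΔ : 0 ≤ F x0 - F xstar := sub_nonneg.mpr (hmin x0)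
  have hWb : (n:ℝ)⁻¹ * ∑ k, ‖b k‖ ^ 2 ≤ 2 * α * L * (F x0 - F xstar) + σ ^ 2 := by
    have hinner : ∑ k, (inner ℝ (a k) gbar : ℝ) = (n:ℝ) * ‖gbar‖ ^ 2 := by
      rw [← sum_inner, hsuma, real_inner_smul_left, real_inner_self_eq_norm_sq]
    have hbb : ∑ k, ‖b k‖ ^ 2 ≤ ∑ k, ‖a k‖ ^ 2 := by
      have h1 : ∀ k : Fin n, ‖b k‖ ^ 2
          = ‖a k‖ ^ 2 - 2 * (inner ℝ (a k) gbar : ℝ) + ‖gbar‖ ^ 2 := by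
        intro k
        simp only [hb]
        exact norm_sub_sq_real _ _
      rw [Finset.sum_congr rfl (fun k _ => h1 k), Finset.sum_add_distrib,
        Finset.sum_sub_distrib, ← Finset.mul_sum, hinner, Finset.sum_const,
        Finset.card_univ, Fintype.card_fin, nsmul_eq_mul]
      nlinarith [sq_nonneg ‖gbar‖, hnR]
    calc (n:ℝ)⁻¹ * ∑ k, ‖b k‖ ^ 2 ≤ (n:ℝ)⁻¹ * ∑ k, ‖a k‖ ^ 2 :=
          mul_le_mul_of_nonneg_left hbb (inv_nonneg.mpr hnR.le)
      _ ≤ 2 * α * L * (F x0 - F xstar) + σ ^ 2 := by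
          have h := hWGC x0
          simpa [ha, hg] using h
  -- permutation expectation facts
  have hcardP : (Fintype.card (Equiv.Perm (Fin n)) : ℝ) = (n.factorial : ℝ) := by
    rw [Fintype.card_perm, Fintype.card_fin]
  have hfac : (0:ℝ) < (n.factorial : ℝ) := by exact_mod_cast n.factorial_pos
  have hdiag : ∀ q : Fin n, ∑ π : Equiv.Perm (Fin n), ‖b (π q)‖ ^ 2
      = (n.factorial : ℝ) * ((n:ℝ)⁻¹ * ∑ k, ‖b k‖ ^ 2) := by
    intro q
    have h := perm_sum_apply (fun k => ‖b k‖ ^ 2) q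
    rw [Fintype.card_fin, hcardP] at h
    have h2 : ∑ π : Equiv.Perm (Fin n), ‖b (π q)‖ ^ 2
        = (n:ℝ)⁻¹ * ((n:ℝ) * ∑ π : Equiv.Perm (Fin n), ‖b (π q)‖ ^ 2) := by
      rw [← mul_assoc, inv_mul_cancel₀ hnR.ne', one_mul]
    rw [h2, h]; ring
  have hinner0 : ∀ q : Fin n,
      ∑ π : Equiv.Perm (Fin n), (inner ℝ (b (π q)) gbar : ℝ) = 0 := by
    intro q
    have h := perm_sum_apply (fun k => (inner ℝ (b k) gbar : ℝ)) q
    have hz : ∑ k, (inner ℝ (b k) gbar : ℝ) = 0 := by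
      rw [← sum_inner, hbsum, inner_zero_left]
    rw [Fintype.card_fin, hz, mul_zero] at h
    exact (mul_eq_zero.mp h).resolve_left hnR.ne'
  have hb2 : 0 ≤ ∑ k, ‖b k‖ ^ 2 := Finset.sum_nonneg fun k _ => sq_nonneg _
  have hcross : ∀ q r : Fin n, q ≠ r →
      ∑ π : Equiv.Perm (Fin n), (inner ℝ (b (π q)) (b (π r)) : ℝ) ≤ 0 := by
    intro q r hqr
    have h := perm_sum_pair (fun u v => (inner ℝ (b u) (b v) : ℝ)) hqr
    rw [offDiag_inner_sum b hbsum, hcardP] at h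
    have hcard : (0:ℝ) < ((Finset.univ : Finset (Fin n)).offDiag.card : ℝ) := by
      have hcard' : 0 < (Finset.univ : Finset (Fin n)).offDiag.card := by
        rw [Finset.offDiag_card, Finset.card_univ, Fintype.card_fin]
        have h2 : n < n * n := by nlinarith [hn]
        omega
      exact_mod_cast hcard'
    nlinarith [h, hcard, mul_nonneg hfac.le hb2]
  -- expected value of A π i
  have hEA : ∀ i ∈ Finset.range n,
      (n.factorial : ℝ)⁻¹ * ∑ π : Equiv.Perm (Fin n), A π i
        ≤ (i:ℝ) * ((n:ℝ)⁻¹ * ∑ k, ‖b k‖ ^ 2) + (i:ℝ) ^ 2 * ‖gbar‖ ^ 2 := by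
    intro i hi
    have hin : i < n := Finset.mem_range.mp hi
    have hpinj : ∀ j ∈ Finset.range i, ∀ k ∈ Finset.range i, j ≠ k → p j ≠ p k := by
      intro j hj k hk hjk hc
      apply hjk
      have hj' : j < n := lt_trans (Finset.mem_range.mp hj) hin
      have hk' : k < n := lt_trans (Finset.mem_range.mp hk) hin
      have := congrArg Fin.val hc
      simpa [hp, Nat.mod_eq_of_lt hj', Nat.mod_eq_of_lt hk'] using this
    have hdecomp : ∀ π : Equiv.Perm (Fin n), (∑ j ∈ Finset.range i, a (π (p j)))
        = (∑ j ∈ Finset.range i, b (π (p j))) + (i:ℝ) • gbar := by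
      intro π
      simp only [hb]
      rw [Finset.sum_sub_distrib, Finset.sum_const, Finset.card_range,
        ← Nat.cast_smul_eq_nsmul ℝ]
      abel
    have hAi : ∀ π : Equiv.Perm (Fin n), A π i
        = ‖∑ j ∈ Finset.range i, b (π (p j))‖ ^ 2
          + 2 * (i:ℝ) * (inner ℝ (∑ j ∈ Finset.range i, b (π (p j))) gbar : ℝ)
          + (i:ℝ) ^ 2 * ‖gbar‖ ^ 2 := by
      intro π
      simp only [hA]
      rw [hdecomp π, norm_add_sq_real, real_inner_smul_right, norm_smul,
        Real.norm_eq_abs, abs_of_nonneg (Nat.cast_nonneg i), mul_pow]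
      ring
    have hsumA : ∑ π : Equiv.Perm (Fin n), A π i
        ≤ (n.factorial : ℝ) * ((i:ℝ) * ((n:ℝ)⁻¹ * ∑ k, ‖b k‖ ^ 2)
            + (i:ℝ) ^ 2 * ‖gbar‖ ^ 2) := by
      rw [Finset.sum_congr rfl (fun π _ => hAi π), Finset.sum_add_distrib,
        Finset.sum_add_distrib]
      have h3 : ∑ _π : Equiv.Perm (Fin n), (i:ℝ) ^ 2 * ‖gbar‖ ^ 2
          = (n.factorial : ℝ) * ((i:ℝ) ^ 2 * ‖gbar‖ ^ 2) := by
        rw [Finset.sum_const, Finset.card_univ, nsmul_eq_mul, hcardP]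
      have h2 : ∑ π : Equiv.Perm (Fin n),
          2 * (i:ℝ) * (inner ℝ (∑ j ∈ Finset.range i, b (π (p j))) gbar : ℝ) = 0 := by
        rw [← Finset.mul_sum]
        have hz : ∑ π : Equiv.Perm (Fin n),
            (inner ℝ (∑ j ∈ Finset.range i, b (π (p j))) gbar : ℝ) = 0 := by
          simp_rw [sum_inner]
          rw [Finset.sum_comm, Finset.sum_congr rfl (fun j _ => hinner0 (p j))]
          simp
        rw [hz, mul_zero]
      have h1 : ∑ π : Equiv.Perm (Fin n), ‖∑ j ∈ Finset.range i, b (π (p j))‖ ^ 2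
          ≤ (i:ℝ) * ((n.factorial : ℝ) * ((n:ℝ)⁻¹ * ∑ k, ‖b k‖ ^ 2)) := by
        have hexp : ∀ π : Equiv.Perm (Fin n),
            ‖∑ j ∈ Finset.range i, b (π (p j))‖ ^ 2
            = ∑ j ∈ Finset.range i, ∑ k ∈ Finset.range i,
                (inner ℝ (b (π (p j))) (b (π (p k))) : ℝ) := by
          intro π
          rw [← real_inner_self_eq_norm_sq, sum_inner]
          exact Finset.sum_congr rfl fun j _ => inner_sum _ _ _
        rw [Finset.sum_congr rfl (fun π _ => hexp π), Finset.sum_comm]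
        rw [Finset.sum_congr rfl (fun j _ => Finset.sum_comm)]
        have hjk : ∀ j ∈ Finset.range i, ∑ k ∈ Finset.range i,
            (∑ π : Equiv.Perm (Fin n), (inner ℝ (b (π (p j))) (b (π (p k))) : ℝ))
            ≤ (n.factorial : ℝ) * ((n:ℝ)⁻¹ * ∑ k, ‖b k‖ ^ 2) := by
          intro j hj
          calc ∑ k ∈ Finset.range i,
              (∑ π : Equiv.Perm (Fin n), (inner ℝ (b (π (p j))) (b (π (p k))) : ℝ))
              ≤ ∑ k ∈ Finset.range i, (if j = k
                  then (n.factorial : ℝ) * ((n:ℝ)⁻¹ * ∑ m, ‖b m‖ ^ 2) else 0) := by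
                apply Finset.sum_le_sum
                intro k hk
                by_cases hcase : j = k
                · subst hcase
                  rw [if_pos rfl, ← hdiag (p j)]
                  apply le_of_eq
                  exact Finset.sum_congr rfl fun π _ => real_inner_self_eq_norm_sq _
                · rw [if_neg hcase]
                  exact hcross _ _ (hpinj j hj k hk hcase)
            _ = (n.factorial : ℝ) * ((n:ℝ)⁻¹ * ∑ k, ‖b k‖ ^ 2) := by
                rw [Finset.sum_ite_eq, if_pos hj]
        calc ∑ j ∈ Finset.range i, ∑ k ∈ Finset.range i,
            (∑ π : Equiv.Perm (Fin n), (inner ℝ (b (π (p j))) (b (π (p k))) : ℝ))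
            ≤ ∑ _j ∈ Finset.range i, (n.factorial : ℝ) * ((n:ℝ)⁻¹ * ∑ k, ‖b k‖ ^ 2) :=
              Finset.sum_le_sum hjk
          _ = (i:ℝ) * ((n.factorial : ℝ) * ((n:ℝ)⁻¹ * ∑ k, ‖b k‖ ^ 2)) := by
              rw [Finset.sum_const, Finset.card_range, nsmul_eq_mul]
      rw [h2, h3]
      have := add_le_add_left (add_le_add_left h1 0) ((n.factorial : ℝ) * ((i:ℝ) ^ 2 * ‖gbar‖ ^ 2))
      calc ∑ π : Equiv.Perm (Fin n), ‖∑ j ∈ Finset.range i, b (π (p j))‖ ^ 2 + 0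
            + (n.factorial : ℝ) * ((i:ℝ) ^ 2 * ‖gbar‖ ^ 2)
          ≤ (i:ℝ) * ((n.factorial : ℝ) * ((n:ℝ)⁻¹ * ∑ k, ‖b k‖ ^ 2)) + 0
            + (n.factorial : ℝ) * ((i:ℝ) ^ 2 * ‖gbar‖ ^ 2) := this
        _ = (n.factorial : ℝ) * ((i:ℝ) * ((n:ℝ)⁻¹ * ∑ k, ‖b k‖ ^ 2)
            + (i:ℝ) ^ 2 * ‖gbar‖ ^ 2) := by ring
    calc (n.factorial : ℝ)⁻¹ * ∑ π : Equiv.Perm (Fin n), A π i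
        ≤ (n.factorial : ℝ)⁻¹ * ((n.factorial : ℝ) * ((i:ℝ) * ((n:ℝ)⁻¹ * ∑ k, ‖b k‖ ^ 2)
            + (i:ℝ) ^ 2 * ‖gbar‖ ^ 2)) :=
          mul_le_mul_of_nonneg_left hsumA (inv_nonneg.mpr hfac.le)
      _ = (i:ℝ) * ((n:ℝ)⁻¹ * ∑ k, ‖b k‖ ^ 2) + (i:ℝ) ^ 2 * ‖gbar‖ ^ 2 := by
          rw [← mul_assoc, inv_mul_cancel₀ hfac.ne', one_mul]
  -- assemble
  have hnn : (2:ℝ) ≤ (n:ℝ) := by exact_mod_cast hn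
  have hG : (0:ℝ) ≤ ‖gbar‖ ^ 2 := sq_nonneg _
  have hsq_le : ∑ i ∈ Finset.range n, (i:ℝ) ^ 2 ≤ (n:ℝ) * ((n:ℝ) - 1) ^ 2 / 2 := by
    have h1 : ∀ i ∈ Finset.range n, (i:ℝ) ^ 2 ≤ (i:ℝ) * ((n:ℝ) - 1) := by
      intro i hi
      have h2 : (i:ℝ) ≤ (n:ℝ) - 1 := by
        have : (i:ℝ) + 1 ≤ (n:ℝ) := by exact_mod_cast Finset.mem_range.mp hi
        linarith
      nlinarith [Nat.cast_nonneg (α := ℝ) i]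
    calc ∑ i ∈ Finset.range n, (i:ℝ) ^ 2
        ≤ ∑ i ∈ Finset.range n, (i:ℝ) * ((n:ℝ) - 1) := Finset.sum_le_sum h1
      _ = (∑ i ∈ Finset.range n, (i:ℝ)) * ((n:ℝ) - 1) := by rw [Finset.sum_mul]
      _ = (n:ℝ) * ((n:ℝ) - 1) ^ 2 / 2 := by rw [hgauss]; ring
  have hEι : ∀ i ∈ Finset.range n,
      (n.factorial : ℝ)⁻¹ * ∑ π : Equiv.Perm (Fin n), A π i
        ≤ (i:ℝ) * (2 * α * L * (F x0 - F xstar) + σ ^ 2) + (i:ℝ) ^ 2 * ‖gbar‖ ^ 2 := by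
    intro i hi
    refine le_trans (hEA i hi) (add_le_add_left ?_ _)
    exact mul_le_mul_of_nonneg_left hWb (Nat.cast_nonneg i)
  have hmain : (↑n.factorial : ℝ)⁻¹ * ∑ π : Equiv.Perm (Fin n), T π
      ≤ 3 * η ^ 2 * ((n:ℝ) * ((n:ℝ) - 1) / 2 * (2 * α * L * (F x0 - F xstar) + σ ^ 2)
          + (n:ℝ) * ((n:ℝ) - 1) ^ 2 / 2 * ‖gbar‖ ^ 2) := by
    calc (↑n.factorial : ℝ)⁻¹ * ∑ π : Equiv.Perm (Fin n), T π
        ≤ (↑n.factorial : ℝ)⁻¹ * ∑ π : Equiv.Perm (Fin n),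
            (3 * η ^ 2 * ∑ i ∈ Finset.range n, A π i) :=
          mul_le_mul_of_nonneg_left (Finset.sum_le_sum fun π _ => hTbound π)
            (inv_nonneg.mpr hfac.le)
      _ = 3 * η ^ 2 * ∑ i ∈ Finset.range n,
            ((n.factorial : ℝ)⁻¹ * ∑ π : Equiv.Perm (Fin n), A π i) := by
          simp only [Finset.mul_sum]
          rw [Finset.sum_comm]
          exact Finset.sum_congr rfl fun i _ => Finset.sum_congr rfl fun π _ => by ring
      _ ≤ 3 * η ^ 2 * ∑ i ∈ Finset.range n,
            ((i:ℝ) * (2 * α * L * (F x0 - F xstar) + σ ^ 2) + (i:ℝ) ^ 2 * ‖gbar‖ ^ 2) := by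
          apply mul_le_mul_of_nonneg_left (Finset.sum_le_sum hEι) (by positivity)
      _ ≤ 3 * η ^ 2 * ((n:ℝ) * ((n:ℝ) - 1) / 2 * (2 * α * L * (F x0 - F xstar) + σ ^ 2)
          + (n:ℝ) * ((n:ℝ) - 1) ^ 2 / 2 * ‖gbar‖ ^ 2) := by
          apply mul_le_mul_of_nonneg_left _ (by positivity)
          rw [Finset.sum_add_distrib, ← Finset.sum_mul, ← Finset.sum_mul, hgauss]
          have hW0 : (0:ℝ) ≤ 2 * α * L * (F x0 - F xstar) + σ ^ 2 := by
            have := mul_nonneg (mul_nonneg (by linarith : (0:ℝ) ≤ 2 * α) hL.le) hΔ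
            nlinarith [sq_nonneg σ]
          exact add_le_add le_rfl (mul_le_mul_of_nonneg_right hsq_le hG)
  refine le_trans hmain ?_
  have hc1 : 3 * ((n:ℝ) * ((n:ℝ) - 1) / 2) ≤ 2 * (n:ℝ) ^ 2 := by nlinarith
  have hc2 : 3 * ((n:ℝ) * ((n:ℝ) - 1) ^ 2 / 2) ≤ 2 * (n:ℝ) ^ 3 := by nlinarith
  have hW0 : (0:ℝ) ≤ 2 * α * L * (F x0 - F xstar) + σ ^ 2 := by
    have := mul_nonneg (mul_nonneg (by linarith : (0:ℝ) ≤ 2 * α) hL.le) hΔ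
    nlinarith [sq_nonneg σ]
  nlinarith [mul_le_mul_of_nonneg_left hc1 (mul_nonneg (sq_nonneg η) hW0),
    mul_le_mul_of_nonneg_left hc2 (mul_nonneg (sq_nonneg η) hG)]
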